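/- (Basuev stability criterion.) Let V : [0,∞) → ℝ ∪ {+∞} be a tempered pair potential on ℝ^d for which there exists a > 0 with V(r) ≥ V(a) > 0 for all r ≤ a, and V(a) > 2μ(a), where μ(a) = sup over all n and all configurations (x_1,...,x_n) ∈ ℝ^{dn} with pairwise distances > a of Σ_{i=1}^n V^−(|x_i|), with V^− = (|V| − V)/2 the negative part. Then V is stable; moreover, the truncated potential V_a (equal to V(a) for r ≤ a and V(r) for r > a) is stable with the same stability constant B as V. -/

import Mathlib

/-- The total pair energy `U(x_1,…,x_m) = ∑_{1 ≤ i < j ≤ m} V(|x_i − x_j|)`. -/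
noncomputable def pairSumU (d : ℕ) (V : ℝ → ℝ) {m : ℕ}
    (x : Fin m → EuclideanSpace ℝ (Fin d)) : ℝ :=
  ∑ p ∈ Finset.univ.filter (fun p : Fin m × Fin m => p.1 < p.2),
    V (dist (x p.1) (x p.2))

/-- `c` is a stability bound for `V`: `U(x_1,…,x_m) ≥ −m c` for all configurations. -/
def IsStabilityBound (d : ℕ) (V : ℝ → ℝ) (c : ℝ) : Prop :=
  ∀ (m : ℕ) (x : Fin m → EuclideanSpace ℝ (Fin d)), -(m : ℝ) * c ≤ pairSumU d V x

/-- The negative part `V⁻ = (|V| − V)/2`. -/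
noncomputable def Vminus (V : ℝ → ℝ) (r : ℝ) : ℝ := (|V r| - V r) / 2

/-- The set of values `∑_i V⁻(|x_i|)` over all configurations with pairwise distances
`> a`; `μ(a)` is its supremum. -/
def muSet (d : ℕ) (V : ℝ → ℝ) (a : ℝ) : Set ℝ :=
  { t | ∃ (m : ℕ) (x : Fin m → EuclideanSpace ℝ (Fin d)),
      (∀ i j, i ≠ j → a < dist (x i) (x j)) ∧ t = ∑ i, Vminus V (‖x i‖) }

noncomputable def mu (d : ℕ) (V : ℝ → ℝ) (a : ℝ) : ℝ := sSup (muSet d V a)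

/-- The truncated potential `V_a`: equal to `V(a)` for `r ≤ a` and to `V(r)` for `r > a`. -/
noncomputable def Vtrunc (V : ℝ → ℝ) (a : ℝ) : ℝ → ℝ := fun r => if r ≤ a then V a else V r

/- ### Auxiliary machinery for the Basuev argument -/

/-- Pair energy of the sub-configuration of `x` indexed by a finset `T`. -/
noncomputable def fE {d m : ℕ} (W : ℝ → ℝ) (x : Fin m → EuclideanSpace ℝ (Fin d))
    (T : Finset (Fin m)) : ℝ :=
  ∑ p ∈ (T ×ˢ T).filter (fun p => p.1 < p.2), W (dist (x p.1) (x p.2))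

lemma neg_vminus_le (V : ℝ → ℝ) (r : ℝ) : -(Vminus V r) ≤ V r := by
  have := neg_abs_le (V r); unfold Vminus; linarith

lemma fE_univ {d m : ℕ} (W : ℝ → ℝ) (x : Fin m → EuclideanSpace ℝ (Fin d)) :
    fE W x Finset.univ = pairSumU d W x := by
  rw [fE, pairSumU, Finset.univ_product_univ]

lemma fE_erase {d m : ℕ} (W : ℝ → ℝ) (x : Fin m → EuclideanSpace ℝ (Fin d))
    (T : Finset (Fin m)) (i : Fin m) (hi : i ∈ T) :
    fE W x T = fE W x (T.erase i) + ∑ j ∈ T.erase i, W (dist (x i) (x j)) := by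
  classical
  unfold fE
  have hsplit : (T ×ˢ T).filter (fun p => p.1 < p.2) =
      ((T.erase i ×ˢ T.erase i).filter (fun p => p.1 < p.2)) ∪
      (({i} ×ˢ (T.erase i).filter (fun j => i < j)) ∪
       (((T.erase i).filter (fun j => j < i)) ×ˢ {i})) := by
    ext p
    simp only [Finset.mem_filter, Finset.mem_union, Finset.mem_product, Finset.mem_erase,
      Finset.mem_singleton]
    constructor
    · rintro ⟨⟨h1, h2⟩, hlt⟩
      by_cases e1 : p.1 = i
      · exact Or.inr (Or.inl ⟨e1, ⟨(e1 ▸ hlt).ne', h2⟩, e1 ▸ hlt⟩)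
      · by_cases e2 : p.2 = i
        · exact Or.inr (Or.inr ⟨⟨⟨e1, h1⟩, e2 ▸ hlt⟩, e2⟩)
        · exact Or.inl ⟨⟨⟨e1, h1⟩, ⟨e2, h2⟩⟩, hlt⟩
    · rintro (⟨⟨⟨_, h1⟩, ⟨_, h2⟩⟩, hlt⟩ | ⟨e1, ⟨⟨_, h2⟩, hlt⟩⟩ | ⟨⟨⟨_, h1⟩, hlt⟩, e2⟩)
      · exact ⟨⟨h1, h2⟩, hlt⟩
      · exact ⟨⟨e1 ▸ hi, h2⟩, e1 ▸ hlt⟩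
      · exact ⟨⟨h1, e2 ▸ hi⟩, e2 ▸ hlt⟩
  rw [hsplit, Finset.sum_union, Finset.sum_union]
  · congr 1
    rw [Finset.sum_product, Finset.sum_singleton, Finset.sum_product]
    simp only [Finset.sum_singleton]
    have : ∀ j ∈ (T.erase i).filter (fun j => j < i), W (dist (x j) (x i)) =
        W (dist (x i) (x j)) := fun j _ => by rw [dist_comm]
    rw [Finset.sum_congr rfl this]
    have hc : (T.erase i).filter (fun j => j < i) =
        (T.erase i).filter (fun j => ¬ i < j) := by
      apply Finset.filter_congr
      intro j hj
      have hne : j ≠ i := Finset.ne_of_mem_erase hj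
      constructor
      · exact fun h => not_lt.mpr h.le
      · intro h; exact lt_of_le_of_ne (not_lt.mp h) hne
    rw [hc, Finset.sum_filter_add_sum_filter_not]
  · simp only [Finset.disjoint_left, Finset.mem_product, Finset.mem_singleton,
      Finset.mem_filter, Finset.mem_erase]
    rintro p ⟨rfl, hp2⟩ ⟨⟨⟨hne, _⟩, _⟩, _⟩
    exact hne rfl
  · simp only [Finset.disjoint_left, Finset.mem_union, Finset.mem_product, Finset.mem_singleton,
      Finset.mem_filter, Finset.mem_erase]
    rintro p ⟨⟨⟨h1, _⟩, ⟨h2, _⟩⟩, _⟩ (⟨e1, _⟩ | ⟨_, e2⟩)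
    · exact h1 e1
    · exact h2 e2

lemma mu_nonneg (d : ℕ) (V : ℝ → ℝ) (a : ℝ) (hbdd : BddAbove (muSet d V a)) :
    0 ≤ mu d V a := by
  apply le_csSup hbdd
  exact ⟨0, (fun i => i.elim0), fun i => i.elim0, by simp⟩

lemma row_bound {d m : ℕ} (V : ℝ → ℝ) (a : ℝ) (hbdd : BddAbove (muSet d V a))
    (x : Fin m → EuclideanSpace ℝ (Fin d)) (z : EuclideanSpace ℝ (Fin d))
    (s : Finset (Fin m))
    (hsep : ∀ j ∈ s, ∀ k ∈ s, j ≠ k → a < dist (x j) (x k)) :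
    ∑ j ∈ s, Vminus V (dist (x j) z) ≤ mu d V a := by
  classical
  apply le_csSup hbdd
  set e := s.orderIsoOfFin rfl with he
  refine ⟨s.card, fun i => x (e i) - z, ?_, ?_⟩
  · intro i j hij
    have h1 : ((e i : Fin m)) ∈ s := (e i).2
    have h2 : ((e j : Fin m)) ∈ s := (e j).2
    have hne : ((e i : Fin m)) ≠ (e j : Fin m) := by
      intro h
      exact hij (e.injective (Subtype.ext h))
    have := hsep _ h1 _ h2 hne
    rwa [dist_sub_right]
  · have : ∀ i : Fin s.card, Vminus V ‖x (e i) - z‖ = Vminus V (dist (x (e i)) z) := by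
      intro i; rw [← dist_eq_norm]
    rw [Finset.sum_congr rfl (fun i _ => this i)]
    rw [← Finset.sum_attach s (fun j => Vminus V (dist (x j) z))]
    exact (Equiv.sum_comp e.toEquiv (fun y => Vminus V (dist (x y) z))).symm

lemma fE_reindex {d m : ℕ} (W : ℝ → ℝ) (x : Fin m → EuclideanSpace ℝ (Fin d))
    (S : Finset (Fin m)) :
    fE W x S = pairSumU d W (fun i : Fin S.card => x ((S.orderIsoOfFin rfl i : Fin m))) := by
  classical
  set e := S.orderIsoOfFin rfl with he
  unfold fE pairSumU
  refine (Finset.sum_bij (fun p _ => (((e p.1 : Fin m)), ((e p.2 : Fin m)))) ?_ ?_ ?_ ?_).symm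
  · intro p hp
    simp only [Finset.mem_filter, Finset.mem_product]
    have hlt : p.1 < p.2 := (Finset.mem_filter.mp hp).2
    refine ⟨⟨(e p.1).2, (e p.2).2⟩, ?_⟩
    exact Subtype.coe_lt_coe.mpr (e.lt_iff_lt.mpr hlt)
  · intro p hp q hq hpq
    have h1 : e p.1 = e q.1 := Subtype.ext (congrArg Prod.fst hpq)
    have h2 : e p.2 = e q.2 := Subtype.ext (congrArg Prod.snd hpq)
    exact Prod.ext (e.injective h1) (e.injective h2)
  · intro q hq
    simp only [Finset.mem_filter, Finset.mem_product] at hq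
    obtain ⟨⟨h1, h2⟩, hlt⟩ := hq
    refine ⟨(e.symm ⟨q.1, h1⟩, e.symm ⟨q.2, h2⟩), ?_, ?_⟩
    · simp only [Finset.mem_filter, Finset.mem_univ, true_and]
      exact e.symm.lt_iff_lt.mpr (Subtype.mk_lt_mk.mpr hlt)
    · simp only [OrderIso.apply_symm_apply]
  · intro p hp
    rfl

lemma coloring {d m : ℕ} (a : ℝ) (x : Fin m → EuclideanSpace ℝ (Fin d)) (Δ : ℕ) :
    ∀ (T : Finset (Fin m)),
    (∀ j ∈ T, (((T.erase j)).filter (fun k => dist (x j) (x k) ≤ a)).card ≤ Δ) →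
    ∃ c : Fin m → Fin (Δ + 1), ∀ j ∈ T, ∀ k ∈ T, j ≠ k → c j = c k →
      a < dist (x j) (x k) := by
  classical
  intro T
  induction T using Finset.induction_on with
  | empty => intro _; exact ⟨fun _ => 0, by simp⟩
  | @insert p T' hp ih =>
    intro hdeg
    have hdeg' : ∀ j ∈ T', (((T'.erase j)).filter (fun k => dist (x j) (x k) ≤ a)).card ≤ Δ := by
      intro j hj
      refine le_trans (Finset.card_le_card ?_) (hdeg j (Finset.mem_insert_of_mem hj))
      apply Finset.filter_subset_filter
      exact Finset.erase_subset_erase _ (Finset.subset_insert _ _)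
    obtain ⟨c, hc⟩ := ih hdeg'
    set N := T'.filter (fun k => dist (x p) (x k) ≤ a) with hN
    have hNcard : N.card ≤ Δ := by
      have : N ⊆ ((insert p T').erase p).filter (fun k => dist (x p) (x k) ≤ a) := by
        rw [Finset.erase_insert hp]
      exact le_trans (Finset.card_le_card this) (hdeg p (Finset.mem_insert_self _ _))
    have himg : (N.image c) ≠ Finset.univ := by
      intro h
      have h1 : (N.image c).card ≤ Δ := le_trans (Finset.card_image_le) hNcard
      rw [h, Finset.card_univ, Fintype.card_fin] at h1
      omega
    have : ¬ ∀ γ, γ ∈ N.image c := fun h => himg (Finset.eq_univ_iff_forall.mpr h)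
    push_neg at this
    obtain ⟨γ, hγ⟩ := this
    refine ⟨Function.update c p γ, ?_⟩
    intro j hj k hk hjk hcol
    rcases Finset.mem_insert.mp hj with heq | hj'
    · rcases Finset.mem_insert.mp hk with heq2 | hk'
      · exact absurd (heq.trans heq2.symm) hjk
      · rw [heq] at hcol ⊢
        rw [Function.update_self, Function.update_of_ne (fun h : k = p => hp (h ▸ hk'))] at hcol
        by_contra hle
        have hkN : k ∈ N := Finset.mem_filter.mpr ⟨hk', not_lt.mp hle⟩
        exact hγ (hcol ▸ Finset.mem_image_of_mem c hkN)
    · rcases Finset.mem_insert.mp hk with heq2 | hk'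
      · rw [heq2] at hcol ⊢
        rw [Function.update_self, Function.update_of_ne (fun h : j = p => hp (h ▸ hj'))] at hcol
        by_contra hle
        rw [dist_comm] at hle
        have hjN : j ∈ N := Finset.mem_filter.mpr ⟨hj', not_lt.mp hle⟩
        exact hγ (hcol ▸ Finset.mem_image_of_mem c hjN)
      · rw [Function.update_of_ne (fun h : j = p => hp (h ▸ hj')),
          Function.update_of_ne (fun h : k = p => hp (h ▸ hk'))] at hcol
        exact hc j hj' k hk' hjk hcol

/-- Basuev's deletion lemma: in a configuration with a pair at distance `≤ a`, some point
has nonnegative `V_a`-interaction with all the others. -/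
lemma deletion {d m : ℕ} (V : ℝ → ℝ) (a : ℝ) (hVa : 0 < V a)
    (hbdd : BddAbove (muSet d V a)) (hgap : 2 * mu d V a < V a)
    (x : Fin m → EuclideanSpace ℝ (Fin d)) (T : Finset (Fin m))
    (hpair : ∃ j ∈ T, ∃ k ∈ T, j ≠ k ∧ dist (x j) (x k) ≤ a) :
    ∃ i ∈ T, 0 ≤ ∑ j ∈ T.erase i, Vtrunc V a (dist (x i) (x j)) := by
  classical
  obtain ⟨j₀, hj₀, k₀, hk₀, hjk₀, hd₀⟩ := hpair
  have hTne : T.Nonempty := ⟨j₀, hj₀⟩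
  set deg : Fin m → ℕ := fun j => (((T.erase j)).filter (fun k => dist (x j) (x k) ≤ a)).card
    with hdeg
  obtain ⟨i, hiT, hmax⟩ := T.exists_max_image deg hTne
  set Δ := deg i with hΔ
  have hΔ1 : 1 ≤ Δ := by
    have : k₀ ∈ ((T.erase j₀)).filter (fun k => dist (x j₀) (x k) ≤ a) :=
      Finset.mem_filter.mpr ⟨Finset.mem_erase.mpr ⟨fun h => hjk₀ h.symm, hk₀⟩, hd₀⟩
    have h1 : 1 ≤ deg j₀ := Finset.card_pos.mpr ⟨k₀, this⟩
    exact h1.trans (hmax j₀ hj₀)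
  obtain ⟨c, hc⟩ := coloring a x Δ T (fun j hj => hmax j hj)
  refine ⟨i, hiT, ?_⟩
  set C := (T.erase i).filter (fun j => dist (x i) (x j) ≤ a) with hC
  set F := (T.erase i).filter (fun j => ¬ dist (x i) (x j) ≤ a) with hF
  have hsplit : ∑ j ∈ T.erase i, Vtrunc V a (dist (x i) (x j)) =
      ∑ j ∈ C, Vtrunc V a (dist (x i) (x j)) + ∑ j ∈ F, Vtrunc V a (dist (x i) (x j)) :=
    (Finset.sum_filter_add_sum_filter_not _ _ _).symm
  have hCsum : ∑ j ∈ C, Vtrunc V a (dist (x i) (x j)) = (Δ : ℝ) * V a := by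
    have hv : ∀ j ∈ C, Vtrunc V a (dist (x i) (x j)) = V a := by
      intro j hj
      have h2 := (Finset.mem_filter.mp hj).2
      simp only [Vtrunc, if_pos h2]
    rw [Finset.sum_congr rfl hv, Finset.sum_const, nsmul_eq_mul]
  have hfiber : ∀ γ : Fin (Δ + 1), ∑ j ∈ F.filter (fun j => c j = γ),
      Vminus V (dist (x j) (x i)) ≤ mu d V a := by
    intro γ
    apply row_bound V a hbdd x (x i)
    intro j hj k hk hjk
    simp only [Finset.mem_filter, hF, Finset.mem_erase] at hj hk
    exact hc j hj.1.1.2 k hk.1.1.2 hjk (hj.2.trans hk.2.symm)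
  have hFsum : ∑ j ∈ F, Vminus V (dist (x j) (x i)) ≤ ((Δ : ℝ) + 1) * mu d V a := by
    have hpart : ∑ γ : Fin (Δ + 1), ∑ j ∈ F.filter (fun j => c j = γ),
        Vminus V (dist (x j) (x i)) = ∑ j ∈ F, Vminus V (dist (x j) (x i)) := by
      exact Finset.sum_fiberwise _ _ _
    rw [← hpart]
    calc ∑ γ : Fin (Δ + 1), ∑ j ∈ F.filter (fun j => c j = γ), Vminus V (dist (x j) (x i))
        ≤ ∑ _γ : Fin (Δ + 1), mu d V a := Finset.sum_le_sum (fun γ _ => hfiber γ)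
      _ = ((Δ : ℝ) + 1) * mu d V a := by
          rw [Finset.sum_const, Finset.card_univ, Fintype.card_fin, nsmul_eq_mul]
          push_cast; ring
  have hFlow : -(((Δ : ℝ) + 1) * mu d V a) ≤ ∑ j ∈ F, Vtrunc V a (dist (x i) (x j)) := by
    calc -(((Δ : ℝ) + 1) * mu d V a) ≤ -∑ j ∈ F, Vminus V (dist (x j) (x i)) := by linarith
      _ = ∑ j ∈ F, -(Vminus V (dist (x j) (x i))) := by rw [Finset.sum_neg_distrib]
      _ ≤ ∑ j ∈ F, Vtrunc V a (dist (x i) (x j)) := by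
          apply Finset.sum_le_sum
          intro j hj
          have hfar : ¬ dist (x i) (x j) ≤ a := (Finset.mem_filter.mp hj).2
          have : Vtrunc V a (dist (x i) (x j)) = V (dist (x i) (x j)) := if_neg hfar
          rw [this, dist_comm (x j) (x i)]
          exact neg_vminus_le V _
  have hmu0 : 0 ≤ mu d V a := mu_nonneg d V a hbdd
  have hΔR : (1 : ℝ) ≤ (Δ : ℝ) := by exact_mod_cast hΔ1
  rw [hsplit, hCsum]
  nlinarith [hFlow, hgap, hmu0, hΔR]

/-- Reduction: any configuration contains an `a`-separated sub-configuration of no larger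
`V_a`-energy. -/
lemma reduction {d m : ℕ} (V : ℝ → ℝ) (a : ℝ) (hVa : 0 < V a)
    (hbdd : BddAbove (muSet d V a)) (hgap : 2 * mu d V a < V a)
    (x : Fin m → EuclideanSpace ℝ (Fin d)) :
    ∀ (n : ℕ) (T : Finset (Fin m)), T.card ≤ n →
    ∃ S ⊆ T, (∀ j ∈ S, ∀ k ∈ S, j ≠ k → a < dist (x j) (x k)) ∧
      fE (Vtrunc V a) x S ≤ fE (Vtrunc V a) x T := by
  classical
  intro n
  induction n with
  | zero =>
    intro T hT
    have : T = ∅ := Finset.card_eq_zero.mp (Nat.le_zero.mp hT)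
    subst this
    exact ⟨∅, Finset.Subset.refl _, by simp, le_refl _⟩
  | succ n ih =>
    intro T hT
    by_cases hsep : ∀ j ∈ T, ∀ k ∈ T, j ≠ k → a < dist (x j) (x k)
    · exact ⟨T, Finset.Subset.refl _, hsep, le_refl _⟩
    · push_neg at hsep
      obtain ⟨j, hj, k, hk, hjk, hle⟩ := hsep
      obtain ⟨i, hiT, hpos⟩ := deletion V a hVa hbdd hgap x T ⟨j, hj, k, hk, hjk, hle⟩
      have hcard : (T.erase i).card ≤ n := by
        rw [Finset.card_erase_of_mem hiT]
        omega
      obtain ⟨S, hST, hSsep, hSle⟩ := ih (T.erase i) hcard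
      refine ⟨S, hST.trans (Finset.erase_subset _ _), hSsep, ?_⟩
      have := fE_erase (Vtrunc V a) x T i hiT
      linarith
      
/-- Lower bound on the `V`-energy of an `a`-separated sub-configuration. -/
lemma sep_lower {d m : ℕ} (V : ℝ → ℝ) (a : ℝ) (hbdd : BddAbove (muSet d V a))
    (x : Fin m → EuclideanSpace ℝ (Fin d)) :
    ∀ (n : ℕ) (S : Finset (Fin m)), S.card ≤ n →
    (∀ j ∈ S, ∀ k ∈ S, j ≠ k → a < dist (x j) (x k)) →
    -(S.card : ℝ) * mu d V a ≤ fE V x S := by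
  classical
  intro n
  induction n with
  | zero =>
    intro S hS _
    have : S = ∅ := Finset.card_eq_zero.mp (Nat.le_zero.mp hS)
    subst this
    simp [fE]
  | succ n ih =>
    intro S hS hsep
    rcases S.eq_empty_or_nonempty with rfl | ⟨i, hi⟩
    · simp [fE]
    · have hcard : (S.erase i).card ≤ n := by
        rw [Finset.card_erase_of_mem hi]; omega
      have hsep' : ∀ j ∈ S.erase i, ∀ k ∈ S.erase i, j ≠ k → a < dist (x j) (x k) :=
        fun j hj k hk hjk => hsep j (Finset.mem_of_mem_erase hj) k (Finset.mem_of_mem_erase hk) hjk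
      have hrec := ih (S.erase i) hcard hsep'
      have hrow : -(mu d V a) ≤ ∑ j ∈ S.erase i, V (dist (x i) (x j)) := by
        have h1 : ∑ j ∈ S.erase i, Vminus V (dist (x j) (x i)) ≤ mu d V a :=
          row_bound V a hbdd x (x i) (S.erase i) hsep'
        have h2 : ∀ j ∈ S.erase i, -(Vminus V (dist (x j) (x i))) ≤ V (dist (x i) (x j)) := by
          intro j hj
          rw [dist_comm (x i) (x j)]
          exact neg_vminus_le V _
        calc -(mu d V a) ≤ -∑ j ∈ S.erase i, Vminus V (dist (x j) (x i)) := by linarith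
          _ = ∑ j ∈ S.erase i, -(Vminus V (dist (x j) (x i))) := by rw [Finset.sum_neg_distrib]
          _ ≤ ∑ j ∈ S.erase i, V (dist (x i) (x j)) := Finset.sum_le_sum h2
      have herase := fE_erase V x S i hi
      have hmu0 : 0 ≤ mu d V a := mu_nonneg d V a hbdd
      have hcards : (S.card : ℝ) = ((S.erase i).card : ℝ) + 1 := by
        rw [Finset.card_erase_of_mem hi]
        have : 1 ≤ S.card := Finset.card_pos.mpr ⟨i, hi⟩
        push_cast [Nat.cast_sub this]
        ring
      rw [herase, hcards]
      linarith

/-- On an `a`-separated finset, `V` and `V_a` give the same sub-configuration energy. -/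
lemma fE_sep_eq {d m : ℕ} (V : ℝ → ℝ) (a : ℝ)
    (x : Fin m → EuclideanSpace ℝ (Fin d)) (S : Finset (Fin m))
    (hsep : ∀ j ∈ S, ∀ k ∈ S, j ≠ k → a < dist (x j) (x k)) :
    fE (Vtrunc V a) x S = fE V x S := by
  apply Finset.sum_congr rfl
  intro p hp
  simp only [Finset.mem_filter, Finset.mem_product] at hp
  have hne : p.1 ≠ p.2 := ne_of_lt hp.2
  have := hsep p.1 hp.1.1 p.2 hp.1.2 hne
  simp only [Vtrunc, if_neg (not_le.mpr this)]

lemma pairSumU_one {d : ℕ} (V : ℝ → ℝ) (x : Fin 1 → EuclideanSpace ℝ (Fin d)) :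
    pairSumU d V x = 0 := by
  rw [pairSumU]
  apply Finset.sum_eq_zero
  intro p hp
  have h := (Finset.mem_filter.mp hp).2
  have heq : p.1 = p.2 := Subsingleton.elim _ _
  rw [heq] at h
  exact absurd h (lt_irrefl _)

/-- Basuev's stability criterion: if `V` is tempered, `V(r) ≥ V(a) > 0` for `r ≤ a`, and
`V(a) > 2μ(a)`, then `V` is stable and the truncated potential `V_a` has exactly the same
stability bounds (hence the same stability constant) as `V`. -/
theorem stmt13 (d : ℕ) (V : ℝ → ℝ) (a : ℝ) (ha : 0 < a)
    (htemp : ∃ r₀ : ℝ, 0 ≤ r₀ ∧ MeasureTheory.IntegrableOn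
      (fun x : EuclideanSpace ℝ (Fin d) => |V ‖x‖|) {x | r₀ ≤ ‖x‖})
    (hcore : ∀ r, 0 ≤ r → r ≤ a → V a ≤ V r) (hVa : 0 < V a)
    (hbdd : BddAbove (muSet d V a))
    (hgap : 2 * mu d V a < V a) :
    (∃ c, IsStabilityBound d V c) ∧
    (∀ c, IsStabilityBound d V c ↔ IsStabilityBound d (Vtrunc V a) c) := by
  classical
  have hmu0 : 0 ≤ mu d V a := mu_nonneg d V a hbdd
  -- V_a ≤ V on distances
  have hValeV : ∀ (m : ℕ) (x : Fin m → EuclideanSpace ℝ (Fin d)),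
      pairSumU d (Vtrunc V a) x ≤ pairSumU d V x := by
    intro m x
    apply Finset.sum_le_sum
    intro p _
    by_cases h : dist (x p.1) (x p.2) ≤ a
    · simp only [Vtrunc, if_pos h]
      exact hcore _ dist_nonneg h
    · simp only [Vtrunc, if_neg h]
      exact le_rfl
  -- the key lower bound for V_a via reduction to separated configurations
  have hVabound : IsStabilityBound d (Vtrunc V a) (mu d V a) := by
    intro m x
    obtain ⟨S, _, hsep, hle⟩ :=
      reduction V a hVa hbdd hgap x m Finset.univ (by simp)
    have h1 : -(S.card : ℝ) * mu d V a ≤ fE V x S :=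
      sep_lower V a hbdd x S.card S (le_refl _) hsep
    have h2 : fE V x S = fE (Vtrunc V a) x S := (fE_sep_eq V a x S hsep).symm
    have h3 : fE (Vtrunc V a) x Finset.univ = pairSumU d (Vtrunc V a) x := fE_univ _ _
    have hcard : (S.card : ℝ) ≤ (m : ℝ) := by
      exact_mod_cast (Finset.card_le_univ S).trans (by simp)
    nlinarith [hle, h1, h2, h3, hmu0, hcard]
  -- forward: a bound for V is a bound for V_a
  have hfwd : ∀ c, IsStabilityBound d V c → IsStabilityBound d (Vtrunc V a) c := by
    intro c hc m x
    have hc0 : 0 ≤ c := by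
      have := hc 1 (fun _ => 0)
      rw [pairSumU_one] at this
      push_cast at this
      linarith
    obtain ⟨S, _, hsep, hle⟩ :=
      reduction V a hVa hbdd hgap x m Finset.univ (by simp)
    have h2 : fE (Vtrunc V a) x S = fE V x S := fE_sep_eq V a x S hsep
    have h4 : fE V x S = pairSumU d V
        (fun i : Fin S.card => x ((S.orderIsoOfFin rfl i : Fin m))) := fE_reindex V x S
    have h5 := hc S.card (fun i : Fin S.card => x ((S.orderIsoOfFin rfl i : Fin m)))
    have h3 : fE (Vtrunc V a) x Finset.univ = pairSumU d (Vtrunc V a) x := fE_univ _ _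
    have hcard : (S.card : ℝ) ≤ (m : ℝ) := by
      exact_mod_cast (Finset.card_le_univ S).trans (by simp)
    nlinarith [hle, h2, h4, h5, h3, hc0, hcard]
  refine ⟨⟨mu d V a, ?_⟩, fun c => ⟨hfwd c, fun hc m x => le_trans (hc m x) (hValeV m x)⟩⟩
  intro m x
  exact le_trans (hVabound m x) (hValeV m x)
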